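/- Let H be a real Hilbert space and A, B self-adjoint Hilbert–Schmidt operators on H with eigenvalues (σ_i) and (τ_j) and spectra contained in [a,b]. If r : [a,b] → ℝ satisfies |r(σ_i) − r(τ_j)| ≤ L|σ_i − τ_j| for all pairs of eigenvalues, then ‖r(A) − r(B)‖_{HS} ≤ L‖A − B‖_{HS}. -/
import Mathlib


open Matrix

lemma frob_conj_inv {n : ℕ} (U V M : Matrix (Fin n) (Fin n) ℝ)
    (hU : Uᵀ * U = 1) (hV : Vᵀ * V = 1) :
    ∑ i, ∑ j, ((Uᵀ * M * V) i j) ^ 2 = ∑ i, ∑ j, (M i j) ^ 2 := by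
  have hU' : U * Uᵀ = 1 := mul_eq_one_comm.mp hU
  have hV' : V * Vᵀ = 1 := mul_eq_one_comm.mp hV
  have key : ∀ N : Matrix (Fin n) (Fin n) ℝ,
      ∑ i, ∑ j, (N i j) ^ 2 = Matrix.trace (Nᵀ * N) := by
    intro N
    simp only [Matrix.trace, Matrix.diag, Matrix.mul_apply, Matrix.transpose_apply, sq]
    rw [Finset.sum_comm]
  rw [key, key M]
  have h1 : (Uᵀ * M * V)ᵀ * (Uᵀ * M * V) = Vᵀ * (Mᵀ * (U * Uᵀ) * M * V) := by
    simp only [Matrix.transpose_mul, Matrix.transpose_transpose, Matrix.mul_assoc]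
  rw [h1, hU', Matrix.mul_one, Matrix.trace_mul_comm, Matrix.mul_assoc, hV',
    Matrix.mul_one]

/-- Lemma 1 (Maurer): if `A = U diag(σ) Uᵀ` and `B = V diag(τ) Vᵀ` are
symmetric with spectra in `[a,b]` and `|r(σᵢ) − r(τⱼ)| ≤ L|σᵢ − τⱼ|` for all
pairs of eigenvalues, then `‖r(A) − r(B)‖_F ≤ L‖A − B‖_F` (Frobenius norm). -/
theorem stmt14 (n : ℕ) (a b L : ℝ) (hL : 0 ≤ L)
    (A B U V : Matrix (Fin n) (Fin n) ℝ) (σ τ : Fin n → ℝ) (r : ℝ → ℝ)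
    (hU : Uᵀ * U = 1) (hV : Vᵀ * V = 1)
    (hA : A = U * Matrix.diagonal σ * Uᵀ) (hB : B = V * Matrix.diagonal τ * Vᵀ)
    (hσ : ∀ i, σ i ∈ Set.Icc a b) (hτ : ∀ j, τ j ∈ Set.Icc a b)
    (hr : ∀ i j, |r (σ i) - r (τ j)| ≤ L * |σ i - τ j|) :
    Real.sqrt (∑ i, ∑ j,
        ((U * Matrix.diagonal (r ∘ σ) * Uᵀ - V * Matrix.diagonal (r ∘ τ) * Vᵀ) i j) ^ 2)
      ≤ L * Real.sqrt (∑ i, ∑ j, ((A - B) i j) ^ 2) := by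
  set W := Uᵀ * V with hW
  -- conjugation identity
  have conj : ∀ f g : Fin n → ℝ,
      Uᵀ * (U * Matrix.diagonal f * Uᵀ - V * Matrix.diagonal g * Vᵀ) * V
        = Matrix.diagonal f * W - W * Matrix.diagonal g := by
    intro f g
    have e1 : Uᵀ * (U * Matrix.diagonal f * Uᵀ) * V = Matrix.diagonal f * W := by
      simp only [← Matrix.mul_assoc, hU, Matrix.one_mul]
      rw [Matrix.mul_assoc]
    have e2 : Uᵀ * (V * Matrix.diagonal g * Vᵀ) * V = W * Matrix.diagonal g := by
      simp only [Matrix.mul_assoc, hV, Matrix.mul_one]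
      rw [← Matrix.mul_assoc]
    rw [Matrix.mul_sub, Matrix.sub_mul, e1, e2]
  have sumconj : ∀ f g : Fin n → ℝ,
      ∑ i, ∑ j, ((U * Matrix.diagonal f * Uᵀ - V * Matrix.diagonal g * Vᵀ) i j) ^ 2
        = ∑ i, ∑ j, (W i j) ^ 2 * (f i - g j) ^ 2 := by
    intro f g
    rw [← frob_conj_inv U V _ hU hV, conj f g]
    apply Finset.sum_congr rfl; intro i _
    apply Finset.sum_congr rfl; intro j _
    simp only [Matrix.sub_apply, Matrix.diagonal_mul, Matrix.mul_diagonal]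
    ring
  have hAB : ∑ i, ∑ j, ((A - B) i j) ^ 2 = ∑ i, ∑ j, (W i j) ^ 2 * (σ i - τ j) ^ 2 := by
    rw [hA, hB]; exact sumconj σ τ
  have hrAB : ∑ i, ∑ j,
      ((U * Matrix.diagonal (r ∘ σ) * Uᵀ - V * Matrix.diagonal (r ∘ τ) * Vᵀ) i j) ^ 2
        = ∑ i, ∑ j, (W i j) ^ 2 * (r (σ i) - r (τ j)) ^ 2 := sumconj (r ∘ σ) (r ∘ τ)
  rw [hrAB, hAB]
  have hbound : ∑ i, ∑ j, (W i j) ^ 2 * (r (σ i) - r (τ j)) ^ 2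
      ≤ L ^ 2 * ∑ i, ∑ j, (W i j) ^ 2 * (σ i - τ j) ^ 2 := by
    rw [Finset.mul_sum]
    apply Finset.sum_le_sum; intro i _
    rw [Finset.mul_sum]
    apply Finset.sum_le_sum; intro j _
    have h1 : (r (σ i) - r (τ j)) ^ 2 ≤ L ^ 2 * (σ i - τ j) ^ 2 := by
      have := hr i j
      have h2 : |r (σ i) - r (τ j)| ^ 2 ≤ (L * |σ i - τ j|) ^ 2 :=
        pow_le_pow_left₀ (abs_nonneg _) this 2
      calc (r (σ i) - r (τ j)) ^ 2 = |r (σ i) - r (τ j)| ^ 2 := (sq_abs _).symm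
        _ ≤ (L * |σ i - τ j|) ^ 2 := h2
        _ = L ^ 2 * (σ i - τ j) ^ 2 := by rw [mul_pow, sq_abs]
    calc (W i j) ^ 2 * (r (σ i) - r (τ j)) ^ 2
        ≤ (W i j) ^ 2 * (L ^ 2 * (σ i - τ j) ^ 2) :=
          mul_le_mul_of_nonneg_left h1 (sq_nonneg _)
      _ = L ^ 2 * ((W i j) ^ 2 * (σ i - τ j) ^ 2) := by ring
  calc Real.sqrt (∑ i, ∑ j, (W i j) ^ 2 * (r (σ i) - r (τ j)) ^ 2)
      ≤ Real.sqrt (L ^ 2 * ∑ i, ∑ j, (W i j) ^ 2 * (σ i - τ j) ^ 2) :=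
        Real.sqrt_le_sqrt hbound
    _ = L * Real.sqrt (∑ i, ∑ j, (W i j) ^ 2 * (σ i - τ j) ^ 2) := by
        rw [Real.sqrt_mul (sq_nonneg L), Real.sqrt_sq hL]
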